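/- Let m be a positive integer, D ⊆ Z_p a coset of p^m Z_p, C ⊆ D a coset of p^n Z_p for some n ≥ m, and f : C → Z_p a surjective affine map. Then for every β ∈ Z_p there exists a coset B ⊆ C of some p^k Z_p such that the affine function g(x) = f(x)/p^m + (x − β)/p^m maps B surjectively onto Z_p. -/

import Mathlib

theorem juggling_step (p : ℕ) [Fact p.Prime] (m n : ℕ) (hm : 0 < m) (hmn : m ≤ n)
    (α β : ℤ_[p]) (a c : ℚ_[p])
    (hsurj : (fun x => a * x + c) ''
        {x : ℚ_[p] | ‖x - (α : ℚ_[p])‖ ≤ (p : ℝ) ^ (-(n : ℤ))}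
      = {y : ℚ_[p] | ‖y‖ ≤ 1}) :
    ∃ (k : ℕ) (γ : ℚ_[p]),
      {x : ℚ_[p] | ‖x - γ‖ ≤ (p : ℝ) ^ (-(k : ℤ))} ⊆
        {x : ℚ_[p] | ‖x - (α : ℚ_[p])‖ ≤ (p : ℝ) ^ (-(n : ℤ))} ∧
      (fun x => (a * x + c) / (p : ℚ_[p]) ^ m + (x - (β : ℚ_[p])) / (p : ℚ_[p]) ^ m) ''
          {x : ℚ_[p] | ‖x - γ‖ ≤ (p : ℝ) ^ (-(k : ℤ))}
        = {y : ℚ_[p] | ‖y‖ ≤ 1} := by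
  have hp : (1:ℝ) < p := Nat.one_lt_cast.mpr (Fact.out : p.Prime).one_lt
  have hp0 : (0:ℝ) < p := lt_trans one_pos hp
  have hball : ∀ x : ℚ_[p], ‖x - (α:ℚ_[p])‖ ≤ (p:ℝ) ^ (-(n:ℤ)) → ‖a * x + c‖ ≤ 1 := by
    intro x hx
    have : a * x + c ∈ {y : ℚ_[p] | ‖y‖ ≤ 1} := by
      rw [← hsurj]; exact ⟨x, hx, rfl⟩
    exact this
  have h0 : (0:ℚ_[p]) ∈ {y : ℚ_[p] | ‖y‖ ≤ 1} := by simp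
  rw [← hsurj] at h0
  obtain ⟨x₀, hx₀b, hx₀'⟩ := h0
  have hx₀ : a * x₀ + c = 0 := hx₀'
  have h1 : (1:ℚ_[p]) ∈ {y : ℚ_[p] | ‖y‖ ≤ 1} := by simp
  rw [← hsurj] at h1
  obtain ⟨x₁, hx₁b, hx₁'⟩ := h1
  have hx₁ : a * x₁ + c = 1 := hx₁'
  simp only [Set.mem_setOf_eq] at hx₀b hx₁b
  -- ‖a‖ ≤ p^n
  have haub : ‖a‖ ≤ (p:ℝ) ^ (n:ℤ) := by
    have hx : ‖(x₀ + (p:ℚ_[p])^n) - (α:ℚ_[p])‖ ≤ (p:ℝ) ^ (-(n:ℤ)) := by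
      have h : (x₀ + (p:ℚ_[p])^n) - (α:ℚ_[p]) = (x₀ - (α:ℚ_[p])) + (p:ℚ_[p])^n := by ring
      rw [h]
      refine le_trans (Padic.nonarchimedean _ _) (max_le hx₀b ?_)
      rw [Padic.norm_p_pow]
    have h2 : ‖a * (x₀ + (p:ℚ_[p])^n) + c‖ ≤ 1 := hball _ hx
    have h3 : a * (x₀ + (p:ℚ_[p])^n) + c = a * (p:ℚ_[p])^n := by
      have h : a * (x₀ + (p:ℚ_[p])^n) + c = (a * x₀ + c) + a * (p:ℚ_[p])^n := by ring
      rw [h, hx₀, zero_add]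
    rw [h3, norm_mul, Padic.norm_p_pow] at h2
    calc ‖a‖ = ‖a‖ * (p:ℝ)^(-(n:ℤ)) * (p:ℝ)^(n:ℤ) := by
          rw [mul_assoc, ← zpow_add₀ (ne_of_gt hp0)]; simp
      _ ≤ 1 * (p:ℝ)^(n:ℤ) := mul_le_mul_of_nonneg_right h2 (zpow_nonneg hp0.le _)
      _ = (p:ℝ)^(n:ℤ) := one_mul _
  -- ‖a‖ ≥ p^n
  have ha1 : a * (x₁ - x₀) = 1 := by
    have h : a * (x₁ - x₀) = (a * x₁ + c) - (a * x₀ + c) := by ring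
    rw [h, hx₁, hx₀, sub_zero]
  have hxd : ‖x₁ - x₀‖ ≤ (p:ℝ) ^ (-(n:ℤ)) := by
    have h : x₁ - x₀ = (x₁ - (α:ℚ_[p])) + -(x₀ - (α:ℚ_[p])) := by ring
    rw [h]
    refine le_trans (Padic.nonarchimedean _ _) (max_le hx₁b ?_)
    rwa [norm_neg]
  have halb : (p:ℝ) ^ (n:ℤ) ≤ ‖a‖ := by
    have hn : ‖a‖ * ‖x₁ - x₀‖ = 1 := by rw [← norm_mul, ha1, norm_one]
    have h4 : 1 ≤ ‖a‖ * (p:ℝ)^(-(n:ℤ)) := by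
      rw [← hn]; exact mul_le_mul_of_nonneg_left hxd (norm_nonneg a)
    calc (p:ℝ)^(n:ℤ) = 1 * (p:ℝ)^(n:ℤ) := (one_mul _).symm
      _ ≤ (‖a‖ * (p:ℝ)^(-(n:ℤ))) * (p:ℝ)^(n:ℤ) :=
          mul_le_mul_of_nonneg_right h4 (zpow_nonneg hp0.le _)
      _ = ‖a‖ := by rw [mul_assoc, ← zpow_add₀ (ne_of_gt hp0)]; simp
  have hanorm : ‖a‖ = (p:ℝ) ^ (n:ℤ) := le_antisymm haub halb
  have hone : (1:ℝ) < (p:ℝ)^(n:ℤ) := by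
    apply one_lt_zpow₀ hp
    exact_mod_cast lt_of_lt_of_le hm hmn
  have ha1norm : ‖a + 1‖ = (p:ℝ) ^ (n:ℤ) := by
    rw [Padic.add_eq_max_of_ne (by rw [hanorm, norm_one]; exact ne_of_gt hone),
      hanorm, norm_one, max_eq_left hone.le]
  have ha1ne : a + 1 ≠ 0 := by
    intro h
    rw [h, norm_zero] at ha1norm
    exact absurd ha1norm.symm (ne_of_gt (zpow_pos hp0 _))
  set γ : ℚ_[p] := ((β:ℚ_[p]) - c) / (a + 1) with hγdef
  have hγeq : (a + 1) * γ = (β:ℚ_[p]) - c := by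
    rw [hγdef]; field_simp
  have hnum : (a+1) * (γ - (α:ℚ_[p])) = ((β:ℚ_[p]) - (α:ℚ_[p])) - (a * (α:ℚ_[p]) + c) := by
    rw [mul_sub, hγeq]; ring
  have hγα : ‖γ - (α:ℚ_[p])‖ ≤ (p:ℝ) ^ (-(n:ℤ)) := by
    have hnn : ‖((β:ℚ_[p]) - (α:ℚ_[p])) - (a * (α:ℚ_[p]) + c)‖ ≤ 1 := by
      have h1 : ‖(β:ℚ_[p]) - (α:ℚ_[p])‖ ≤ 1 := by
        rw [sub_eq_add_neg]
        refine le_trans (Padic.nonarchimedean _ _) (max_le β.norm_le_one ?_)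
        rw [norm_neg]; exact α.norm_le_one
      have h2 : ‖a * (α:ℚ_[p]) + c‖ ≤ 1 := by
        apply hball
        simp [zpow_nonneg hp0.le]
      rw [sub_eq_add_neg]
      refine le_trans (Padic.nonarchimedean _ _) (max_le h1 ?_)
      rwa [norm_neg]
    have h3 : ‖a+1‖ * ‖γ - (α:ℚ_[p])‖ ≤ 1 := by rw [← norm_mul, hnum]; exact hnn
    rw [ha1norm] at h3
    calc ‖γ - (α:ℚ_[p])‖ = (p:ℝ)^(-(n:ℤ)) * ((p:ℝ)^(n:ℤ) * ‖γ - (α:ℚ_[p])‖) := by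
          rw [← mul_assoc, ← zpow_add₀ (ne_of_gt hp0)]; simp
      _ ≤ (p:ℝ)^(-(n:ℤ)) * 1 := mul_le_mul_of_nonneg_left h3 (zpow_nonneg hp0.le _)
      _ = (p:ℝ)^(-(n:ℤ)) := mul_one _
  have hc : (-(↑(n+m):ℤ)) = -(n:ℤ) - (m:ℤ) := by push_cast; ring
  refine ⟨n + m, γ, ?_, ?_⟩
  · intro x hx
    simp only [Set.mem_setOf_eq] at hx ⊢
    have hle : (p:ℝ)^(-(↑(n+m):ℤ)) ≤ (p:ℝ)^(-(n:ℤ)) := by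
      apply zpow_le_zpow_right₀ hp.le
      omega
    have h : x - (α:ℚ_[p]) = (x - γ) + (γ - (α:ℚ_[p])) := by ring
    rw [h]
    exact le_trans (Padic.nonarchimedean _ _) (max_le (le_trans hx hle) hγα)
  · have key : ∀ x : ℚ_[p],
        (a * x + c) / (p:ℚ_[p])^m + (x - (β:ℚ_[p])) / (p:ℚ_[p])^m
          = (a + 1) * (x - γ) / (p:ℚ_[p])^m := by
      intro x
      rw [← add_div]
      congr 1
      rw [mul_sub, hγeq]; ring
    have hAnorm : ∀ x : ℚ_[p], ‖(a + 1) * (x - γ) / (p:ℚ_[p])^m‖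
        = (p:ℝ)^((n:ℤ)+(m:ℤ)) * ‖x - γ‖ := by
      intro x
      rw [norm_div, norm_mul, ha1norm, Padic.norm_p_pow, zpow_add₀ (ne_of_gt hp0)]
      rw [div_eq_mul_inv, ← zpow_neg]
      ring
    ext y
    simp only [Set.mem_image, Set.mem_setOf_eq]
    constructor
    · rintro ⟨x, hx, rfl⟩
      rw [key x, hAnorm x]
      have he : (n:ℤ)+(m:ℤ) + (-(n:ℤ)-(m:ℤ)) = 0 := by ring
      calc (p:ℝ)^((n:ℤ)+(m:ℤ)) * ‖x - γ‖
          ≤ (p:ℝ)^((n:ℤ)+(m:ℤ)) * (p:ℝ)^(-(↑(n+m):ℤ)) :=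
            mul_le_mul_of_nonneg_left hx (zpow_nonneg hp0.le _)
        _ = 1 := by rw [hc, ← zpow_add₀ (ne_of_gt hp0), he, zpow_zero]
    · intro hy
      refine ⟨γ + y * (p:ℚ_[p])^m / (a + 1), ?_, ?_⟩
      · have h : γ + y * (p:ℚ_[p])^m / (a + 1) - γ = y * (p:ℚ_[p])^m / (a + 1) := by ring
        rw [h, norm_div, norm_mul, ha1norm, Padic.norm_p_pow]
        have he : -(m:ℤ) + -(n:ℤ) = -(n:ℤ) - (m:ℤ) := by ring
        calc ‖y‖ * (p:ℝ)^(-(m:ℤ)) / (p:ℝ)^(n:ℤ)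
            ≤ 1 * (p:ℝ)^(-(m:ℤ)) / (p:ℝ)^(n:ℤ) := by
              gcongr
          _ = (p:ℝ)^(-(↑(n+m):ℤ)) := by
              rw [one_mul, div_eq_mul_inv, ← zpow_neg, ← zpow_add₀ (ne_of_gt hp0), he, hc]
      · rw [key]
        have h1 : γ + y * (p:ℚ_[p])^m / (a + 1) - γ = y * (p:ℚ_[p])^m / (a + 1) := by ring
        rw [h1]
        have hpm : ((p:ℚ_[p])^m) ≠ 0 := pow_ne_zero _ (Nat.cast_ne_zero.mpr (Fact.out : p.Prime).ne_zero)
        field_simp
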